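/- Let A be an associative algebra over a field F of characteristic ≠ 2 and let U be an ideal of the Lie algebra A^(−) (i.e., [U, A] ⊆ U for the bracket [a,b] = ab − ba). Let id_A([U,U]) be the associative two-sided ideal of A generated by all commutators [u,u'] with u, u' ∈ U. Then [id_A([U,U]), A] ⊆ U. -/

import Mathlib

/-- Alahmadi–Alsulami: if `U` is a Lie ideal of an associative algebra `A` over a field of
characteristic `≠ 2`, then `[id_A([U,U]), A] ⊆ U`. -/
theorem commutator_of_ideal_gen_subset (F A : Type*) [Field F] [Ring A] [Algebra F A]
    (h2 : (2 : F) ≠ 0) (U : Submodule F A) (hU : ∀ u ∈ U, ∀ a : A, u * a - a * u ∈ U) :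
    ∀ x ∈ TwoSidedIdeal.span {y : A | ∃ u ∈ U, ∃ u' ∈ U, y = u * u' - u' * u},
      ∀ a : A, x * a - a * x ∈ U := by
  -- Step 1: products of two elements of U commute into U (Jordan identity + char ≠ 2)
  have hUU : ∀ p ∈ U, ∀ q ∈ U, ∀ a : A, (p * q) * a - a * (p * q) ∈ U := by
    intro p hp q hq a
    have X : p * (q * a + a * q) - (q * a + a * q) * p ∈ U := hU p hp _
    have Y : q * (p * a + a * p) - (p * a + a * p) * q ∈ U := hU q hq _
    have Z : (p * q - q * p) * a - a * (p * q - q * p) ∈ U := hU _ (hU p hp q) a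
    have key : ((p * q) * a - a * (p * q)) + ((p * q) * a - a * (p * q)) =
        (p * (q * a + a * q) - (q * a + a * q) * p)
        + (q * (p * a + a * p) - (p * a + a * p) * q)
        + ((p * q - q * p) * a - a * (p * q - q * p)) := by noncomm_ring
    have hsum : ((p * q) * a - a * (p * q)) + ((p * q) * a - a * (p * q)) ∈ U := by
      rw [key]; exact U.add_mem (U.add_mem X Y) Z
    have h := U.smul_mem ((2 : F)⁻¹) hsum
    rwa [← two_smul F ((p * q) * a - a * (p * q)), ← smul_assoc, smul_eq_mul,
      inv_mul_cancel₀ h2, one_smul] at h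
  -- Step 2: [U,U] * A commutes into U
  have hka : ∀ u ∈ U, ∀ v ∈ U, ∀ x a : A,
      ((u * v - v * u) * x) * a - a * ((u * v - v * u) * x) ∈ U := by
    intro u hu v hv x a
    have w1U : u * (v * x) - (v * x) * u ∈ U := hU u hu _
    have t1 : (u * (v * x) - (v * x) * u) * a - a * (u * (v * x) - (v * x) * u) ∈ U :=
      hU _ w1U a
    have t2 : (v * (u * x - x * u)) * a - a * (v * (u * x - x * u)) ∈ U :=
      hUU v hv _ (hU u hu x) a
    have key : ((u * v - v * u) * x) * a - a * ((u * v - v * u) * x) =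
        ((u * (v * x) - (v * x) * u) * a - a * (u * (v * x) - (v * x) * u))
        - ((v * (u * x - x * u)) * a - a * (v * (u * x - x * u))) := by noncomm_ring
    rw [key]; exact U.sub_mem t1 t2
  -- Step 3: A * [U,U] * A commutes into U
  have hmain : ∀ u ∈ U, ∀ v ∈ U, ∀ x y a : A,
      (x * (u * v - v * u) * y) * a - a * (x * (u * v - v * u) * y) ∈ U := by
    intro u hu v hv x y a
    set w1 : A := u * (v * y) - (v * y) * u with hw1
    set w : A := u * y - y * u with hw
    have hw1U : w1 ∈ U := hU u hu _
    have hwU : w ∈ U := hU u hu _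
    have hp1U : x * v - v * x ∈ U := by
      have := U.neg_mem (hU v hv x); simpa [neg_sub] using this
    have hp2U : x * w - w * x ∈ U := by
      have := U.neg_mem (hU w hwU x); simpa [neg_sub] using this
    have hs1U : x * w1 - w1 * x ∈ U := by
      have := U.neg_mem (hU w1 hw1U x); simpa [neg_sub] using this
    have t1 : (x * w1 - w1 * x) * a - a * (x * w1 - w1 * x) ∈ U := hU _ hs1U a
    have t2 : ((x * v - v * x) * w) * a - a * ((x * v - v * x) * w) ∈ U :=
      hUU _ hp1U w hwU a
    have t3 : (v * (x * w - w * x)) * a - a * (v * (x * w - w * x)) ∈ U :=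
      hUU v hv _ hp2U a
    have t4 : ((u * v - v * u) * (y * x)) * a - a * ((u * v - v * u) * (y * x)) ∈ U :=
      hka u hu v hv (y * x) a
    have key : (x * (u * v - v * u) * y) * a - a * (x * (u * v - v * u) * y) =
        ((x * w1 - w1 * x) * a - a * (x * w1 - w1 * x))
        - (((x * v - v * x) * w) * a - a * ((x * v - v * x) * w))
        - ((v * (x * w - w * x)) * a - a * (v * (x * w - w * x)))
        + (((u * v - v * u) * (y * x)) * a - a * ((u * v - v * u) * (y * x))) := by
      rw [hw1, hw]; noncomm_ring
    rw [key]
    exact U.add_mem (U.sub_mem (U.sub_mem t1 t2) t3) t4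
  -- Step 4: induct over the additive closure description of the span
  intro z hz a
  rw [TwoSidedIdeal.mem_span_iff_mem_addSubgroup_closure] at hz
  induction hz using AddSubgroup.closure_induction with
  | mem g hg =>
    obtain ⟨w, ⟨b, -, g', hg', rfl⟩, c, -, rfl⟩ := hg
    obtain ⟨u, hu, v, hv, rfl⟩ := hg'
    have := hmain u hu v hv b c a
    simpa [mul_assoc] using this
  | zero => simpa using U.zero_mem
  | add s t _ _ hs ht =>
    have : (s + t) * a - a * (s + t) = (s * a - a * s) + (t * a - a * t) := by noncomm_ring
    rw [this]; exact U.add_mem hs ht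
  | neg s _ hs =>
    have : (-s) * a - a * (-s) = -(s * a - a * s) := by noncomm_ring
    rw [this]; exact U.neg_mem hs
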